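/- Let (r_k) be a non-increasing sequence of positive real numbers converging to 0, let α ∈ (0, 1] and β > 0, and suppose there exists N ∈ ℕ such that r_{k+1}^α ≤ β(r_k − r_{k+1}) for all k ≥ N. Then (r_k) converges linearly to 0 with rate β/(1+β): there exists a constant c > 0 such that r_k ≤ c·(β/(1+β))^k for all k ∈ ℕ. -/
import Mathlib


open Filter Topology

/-- Lemma on convergence rates (`r_{k+1}^α ≤ β(r_k − r_{k+1})`),
case `α ∈ (0,1]`: linear convergence with rate `β/(1+β)`. -/
theorem stmt_10
    (r : ℕ → ℝ) (hmono : ∀ k, r (k + 1) ≤ r k) (hpos : ∀ k, 0 < r k)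
    (hto0 : Tendsto r atTop (𝓝 0))
    (α β : ℝ) (hα : α ∈ Set.Ioc (0 : ℝ) 1) (hβ : 0 < β)
    (N : ℕ) (hrec : ∀ k, N ≤ k → r (k + 1) ^ α ≤ β * (r k - r (k + 1))) :
    ∃ c > 0, ∀ k : ℕ, r k ≤ c * (β / (1 + β)) ^ k := by
  set q : ℝ := β / (1 + β) with hqdef
  have h1β : (0:ℝ) < 1 + β := by linarith
  have hq0 : 0 < q := div_pos hβ h1β
  have hq1 : q < 1 := by
    rw [hqdef, div_lt_one h1β]; linarith
  have hanti : Antitone r := antitone_nat_of_succ_le hmono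
  -- eventually r k ≤ 1
  have hev : ∀ᶠ k in atTop, r k < 1 := (tendsto_order.1 hto0).2 1 one_pos
  obtain ⟨M0, hM0⟩ := hev.exists_forall_of_atTop
  set M := max N M0 with hM
  -- key contraction step
  have hstep : ∀ k, M ≤ k → r (k + 1) ≤ q * r k := by
    intro k hk
    have hk1 : r (k + 1) ≤ 1 := le_of_lt (hM0 (k+1) (le_trans (le_max_right _ _) (le_trans hk (Nat.le_succ k))))
    have hx : 0 < r (k + 1) := hpos _
    have h1 : r (k + 1) ^ (1:ℝ) ≤ r (k + 1) ^ α :=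
      Real.rpow_le_rpow_of_exponent_ge hx hk1 hα.2
    rw [Real.rpow_one] at h1
    have h2 := hrec k (le_trans (le_max_left _ _) hk)
    have h3 : r (k + 1) ≤ β * (r k - r (k + 1)) := le_trans h1 h2
    rw [hqdef, div_mul_eq_mul_div, le_div_iff₀ h1β]
    nlinarith
  -- geometric decay after M
  have hgeo : ∀ n, r (M + n) ≤ r M * q ^ n := by
    intro n
    induction n with
    | zero => simp
    | succ n ih =>
      have := hstep (M + n) (Nat.le_add_right _ _)
      calc r (M + (n + 1)) = r ((M + n) + 1) := by ring_nf
        _ ≤ q * r (M + n) := this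
        _ ≤ q * (r M * q ^ n) := by nlinarith [hpos (M+n)]
        _ = r M * q ^ (n + 1) := by ring
  refine ⟨r 0 / q ^ M, div_pos (hpos 0) (pow_pos hq0 M), ?_⟩
  intro k
  rcases le_or_gt M k with h | h
  · obtain ⟨n, rfl⟩ := Nat.exists_eq_add_of_le h
    calc r (M + n) ≤ r M * q ^ n := hgeo n
      _ ≤ r 0 * q ^ n := by
          have := hanti (Nat.zero_le M)
          nlinarith [pow_pos hq0 n]
      _ = r 0 / q ^ M * q ^ (M + n) := by
          field_simp [pow_add]
          ring
  · have h1 : r k ≤ r 0 := hanti (Nat.zero_le k)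
    have h2 : q ^ M ≤ q ^ k := pow_le_pow_of_le_one hq0.le hq1.le h.le
    calc r k ≤ r 0 := h1
      _ = r 0 / q ^ M * q ^ M := by field_simp
      _ ≤ r 0 / q ^ M * q ^ k := by
          have : 0 < r 0 / q ^ M := div_pos (hpos 0) (pow_pos hq0 M)
          nlinarith
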